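/- Let ι be a type, s a nonempty finite subset of ι, v : ι → ℝ injective on s (the interpolation nodes), f : ι → ℝ (the data values), and x ∈ ℝ with x ≠ v(i) for all i ∈ s. For i ∈ s define the barycentric weight u_i = (Π_{j ∈ s, j ≠ i} (v(i) − v(j)))^{−1}. Then Σ_{i ∈ s} u_i/(x − v(i)) ≠ 0, and the Lagrange interpolation polynomial P of the data (i.e., the unique polynomial of degree < |s| with P(v(i)) = f(i) for all i ∈ s) satisfies P(x) = (Σ_{i ∈ s} u_i·f(i)/(x − v(i))) / (Σ_{i ∈ s} u_i/(x − v(i))). -/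

import Mathlib

theorem stmt_18 {ι : Type*} [DecidableEq ι] (s : Finset ι) (hs : s.Nonempty)
    (v : ι → ℝ) (hinj : Set.InjOn v s) (f : ι → ℝ) (x : ℝ)
    (hx : ∀ i ∈ s, x ≠ v i)
    (u : ι → ℝ) (hu : ∀ i ∈ s, u i = (∏ j ∈ s.erase i, (v i - v j))⁻¹) :
    (∑ i ∈ s, u i / (x - v i)) ≠ 0 ∧
    ∀ P : Polynomial ℝ, P.degree < (s.card : WithBot ℕ) →
      (∀ i ∈ s, P.eval (v i) = f i) →
      P.eval x = (∑ i ∈ s, u i * f i / (x - v i)) / (∑ i ∈ s, u i / (x - v i)) := by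
  have hw : ∀ i ∈ s, u i = Lagrange.nodalWeight s v i := by
    intro i hi
    rw [hu i hi, Lagrange.nodalWeight, Finset.prod_inv_distrib]
  have h1 : (∑ i ∈ s, u i / (x - v i)) =
      ∑ i ∈ s, Lagrange.nodalWeight s v i * (x - v i)⁻¹ := by
    refine Finset.sum_congr rfl fun i hi => ?_
    rw [hw i hi, div_eq_mul_inv]
  constructor
  · rw [h1]
    exact Lagrange.sum_nodalWeight_mul_inv_sub_ne_zero hinj hx hs
  · intro P hdeg heval
    have hP : P = Lagrange.interpolate s v f :=
      Lagrange.eq_interpolate_of_eval_eq f hinj hdeg heval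
    rw [hP, Lagrange.eval_interpolate_not_at_node' f hinj hs hx, h1]
    congr 1
    refine Finset.sum_congr rfl fun i hi => ?_
    rw [hw i hi]
    ring
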